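/- If ≺_m and ≺_s are almost compatible, then for every input f = (f_1,…,f_d) ∈ P^d the set of TRP pairs has only finitely many similarity classes. -/

import Mathlib

namespace TRB

open MvPolynomial
open scoped Classical

/-- Monomials in the variables `x₁, …, xₙ`, identified with their exponent vectors;
a monomial `m₁` divides `m₂` iff the exponent vector of `m₁` is componentwise `≤`. -/
abbrev Mon (n : ℕ) := Fin n →₀ ℕ

/-- Module monomials (signatures) `x^α E_i` of the free module `P^d`. -/
abbrev Sig (n d : ℕ) := Mon n × Fin d

/-- The action of a monomial on a module monomial: `m • (x^α E_i) = (m x^α) E_i`. -/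
noncomputable def Sig.smul {n d : ℕ} (m : Mon n) (s : Sig n d) : Sig n d := (m + s.1, s.2)

/-- An admissible monomial order on the monomials of `P = K[x₁,…,xₙ]`:
a (strict) linear order such that `1 ⪯ m` for every monomial `m`, and
multiplication by a monomial is strictly monotone. -/
structure MonOrder (n : ℕ) where
  lt : Mon n → Mon n → Prop
  irrefl : ∀ a, ¬ lt a a
  trans : ∀ a b c, lt a b → lt b c → lt a c
  total : ∀ a b, lt a b ∨ a = b ∨ lt b a
  zero_lt : ∀ a, a ≠ 0 → lt 0 a
  mul_lt_mul : ∀ (m a b : Mon n), lt a b → lt (m + a) (m + b)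

/-- An admissible signature order on module monomials:
a (strict) linear order with `s ⪯ m • s` for every monomial `m`, and such that
multiplication by a monomial is strictly monotone. -/
structure SigOrder (n d : ℕ) where
  lt : Sig n d → Sig n d → Prop
  irrefl : ∀ s, ¬ lt s s
  trans : ∀ s t r, lt s t → lt t r → lt s r
  total : ∀ s t, lt s t ∨ s = t ∨ lt t s
  le_smul : ∀ (m : Mon n) (s : Sig n d), s = Sig.smul m s ∨ lt s (Sig.smul m s)
  smul_lt_smul : ∀ (m : Mon n) (s t : Sig n d), lt s t → lt (Sig.smul m s) (Sig.smul m t)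

/-- Non-strict version of a monomial order. -/
def MonOrder.le {n : ℕ} (mo : MonOrder n) (a b : Mon n) : Prop := mo.lt a b ∨ a = b

/-- Non-strict version of a signature order. -/
def SigOrder.le {n d : ℕ} (so : SigOrder n d) (s t : Sig n d) : Prop := so.lt s t ∨ s = t

/-- The `≺_m`-leading monomial of a polynomial (junk value `0` on the zero polynomial). -/
noncomputable def MonOrder.lm {n : ℕ} {K : Type*} [CommSemiring K] (mo : MonOrder n)
    (v : MvPolynomial (Fin n) K) : Mon n :=
  if h : ∃ m ∈ v.support, ∀ m' ∈ v.support, m' ≠ m → mo.lt m' m then h.choose else 0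

/-- The signature of a module element `u ∈ P^d`: the `≺_s`-largest module monomial
`x^α E_i` whose coefficient in `u` is nonzero (junk value on `u = 0`). -/
noncomputable def SigOrder.sig {n d : ℕ} [NeZero d] {K : Type*} [CommSemiring K]
    (so : SigOrder n d) (u : Fin d → MvPolynomial (Fin n) K) : Sig n d :=
  if h : ∃ s : Sig n d, (u s.2).coeff s.1 ≠ 0 ∧
      ∀ t : Sig n d, (u t.2).coeff t.1 ≠ 0 → t ≠ s → so.lt t s
  then h.choose else (0, ⟨0, Nat.pos_of_ne_zero (NeZero.ne d)⟩)

/-- The ambient type of candidate pairs `(u, v) ∈ P^d × P`. -/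
abbrev PairT (K : Type*) [CommSemiring K] (n d : ℕ) :=
  (Fin d → MvPolynomial (Fin n) K) × MvPolynomial (Fin n) K

variable {K : Type*} [Field K] {n d : ℕ}

/-- `(u, v)` is a pair (w.r.t. the input `f`) if `u ⬝ f = Σ_i u_i f_i = v`. -/
def IsPair (f : Fin d → MvPolynomial (Fin n) K) (p : PairT K n d) : Prop :=
  ∑ i, p.1 i * f i = p.2

/-- Leading monomial of a pair: `lm p = lm v`. -/
noncomputable def lmP (mo : MonOrder n) (p : PairT K n d) : Mon n := mo.lm p.2

/-- Signature of a pair: `sig p = sig u`. -/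
noncomputable def sigP [NeZero d] (so : SigOrder n d) (p : PairT K n d) : Sig n d :=
  so.sig p.1

/-- The pair order: `p ≺_p q` iff `lm(p)·sig(q) ≺_s lm(q)·sig(p)`. -/
def PairLt [NeZero d] (mo : MonOrder n) (so : SigOrder n d) (p q : PairT K n d) : Prop :=
  so.lt (Sig.smul (lmP mo p) (sigP so q)) (Sig.smul (lmP mo q) (sigP so p))

/-- Pairs are similar if `lm(p)·sig(q) = lm(q)·sig(p)`. -/
def Similar [NeZero d] (mo : MonOrder n) (so : SigOrder n d) (p q : PairT K n d) : Prop :=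
  Sig.smul (lmP mo p) (sigP so q) = Sig.smul (lmP mo q) (sigP so p)

/-- `p ⪯_p q`. -/
def PairLE [NeZero d] (mo : MonOrder n) (so : SigOrder n d) (p q : PairT K n d) : Prop :=
  PairLt mo so p q ∨ Similar mo so p q

/-- Pairs are equivalent if they have the same signature and the same leading monomial. -/
def Equivalent [NeZero d] (mo : MonOrder n) (so : SigOrder n d) (p q : PairT K n d) : Prop :=
  sigP so p = sigP so q ∧ lmP mo p = lmP mo q

/-- `p` is top reducible by `q`: both non-syzygy, `p ≺_p q` and `lm(q) ∣ lm(p)`. -/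
def TopRed [NeZero d] (mo : MonOrder n) (so : SigOrder n d) (p q : PairT K n d) : Prop :=
  p.2 ≠ 0 ∧ q.2 ≠ 0 ∧ PairLt mo so p q ∧ lmP mo q ≤ lmP mo p

/-- A TRP pair: a non-syzygy pair that is top reducible by no pair. -/
def IsTRP [NeZero d] (f : Fin d → MvPolynomial (Fin n) K) (mo : MonOrder n)
    (so : SigOrder n d) (p : PairT K n d) : Prop :=
  IsPair f p ∧ p.2 ≠ 0 ∧ ∀ q : PairT K n d, IsPair f q → ¬ TopRed mo so p q

/-- Divisibility of signatures: `x^α E_i ∣ x^β E_j` iff `i = j` and `x^α ∣ x^β`. -/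
def SigDvd {n d : ℕ} (s t : Sig n d) : Prop := s.2 = t.2 ∧ s.1 ≤ t.1

/-- A TRB pair: a TRP pair `p` such that no TRP pair similar to `p` has signature
properly dividing `sig p`. -/
def IsTRB [NeZero d] (f : Fin d → MvPolynomial (Fin n) K) (mo : MonOrder n)
    (so : SigOrder n d) (p : PairT K n d) : Prop :=
  IsTRP f mo so p ∧ ∀ q : PairT K n d, IsTRP f mo so q → Similar mo so p q →
    SigDvd (sigP so q) (sigP so p) → sigP so q = sigP so p

/-- A signature is syzygy if it is the signature of a syzygy pair `(u, 0)`, `u ≠ 0`. -/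
def IsSyzygySig [NeZero d] (f : Fin d → MvPolynomial (Fin n) K) (so : SigOrder n d)
    (s : Sig n d) : Prop :=
  ∃ u : Fin d → MvPolynomial (Fin n) K, u ≠ 0 ∧ IsPair f (u, 0) ∧ so.sig u = s

/-- The sub-order `≺_{s,i}` on monomials: `x^α ≺_{s,i} x^β` iff `x^α E_i ≺_s x^β E_i`. -/
def SubOrder {n d : ℕ} (so : SigOrder n d) (i : Fin d) (a b : Mon n) : Prop :=
  so.lt (a, i) (b, i)

/-- The sub-order `≺_{s,i}` coincides with `≺_m`. -/
def EqOrders {n d : ℕ} (so : SigOrder n d) (mo : MonOrder n) (i : Fin d) : Prop :=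
  ∀ a b : Mon n, SubOrder so i a b ↔ mo.lt a b

/-- `≺_m` and `≺_s` are almost compatible: either every sub-order `≺_{s,i}` coincides
with `≺_m`, or there is exactly one index `k` with `≺_{s,k} ≠ ≺_m`, and this `k`
satisfies `x^α E_k ≺_s E_i` for every monomial `x^α` and every index `i ≠ k`. -/
def AlmostCompatible {n d : ℕ} (mo : MonOrder n) (so : SigOrder n d) : Prop :=
  (∀ i, EqOrders so mo i) ∨
  (∃ k, ¬ EqOrders so mo k ∧ (∀ i, i ≠ k → EqOrders so mo i) ∧
    ∀ (a : Mon n) (i : Fin d), i ≠ k → so.lt (a, k) ((0 : Mon n), i))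

/-- `≺_m` and `≺_s` are compatible: `s₁ ⪯_s s₂` and `m₁ ⪯_m m₂` imply
`m₁·s₁ ⪯_s m₂·s₂`, with equality only when `s₁ = s₂` and `m₁ = m₂`. -/
def Compatible {n d : ℕ} (mo : MonOrder n) (so : SigOrder n d) : Prop :=
  ∀ (s₁ s₂ : Sig n d) (m₁ m₂ : Mon n), so.le s₁ s₂ → mo.le m₁ m₂ →
    so.le (Sig.smul m₁ s₁) (Sig.smul m₂ s₂) ∧
    (Sig.smul m₁ s₁ = Sig.smul m₂ s₂ → s₁ = s₂ ∧ m₁ = m₂)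

/-- The multiplied pair `m·p = (X^m · u, X^m · v)`. -/
noncomputable def mulPair (m : Mon n) (p : PairT K n d) : PairT K n d :=
  (fun i => monomial m (1 : K) * p.1 i, monomial m (1 : K) * p.2)

/-- `[m, p]` is the J-pair of the non-similar non-syzygy pairs `p₁, p₂`:
`p` is the `≺_p`-smaller of the two and `m·lm(p) = lcm(lm p₁, lm p₂)`. -/
def IsJPair [NeZero d] (mo : MonOrder n) (so : SigOrder n d) (p₁ p₂ : PairT K n d)
    (m : Mon n) (p : PairT K n d) : Prop :=
  p₁.2 ≠ 0 ∧ p₂.2 ≠ 0 ∧ ¬ Similar mo so p₁ p₂ ∧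
  ((PairLt mo so p₁ p₂ ∧ p = p₁) ∨ (PairLt mo so p₂ p₁ ∧ p = p₂)) ∧
  m + lmP mo p = lmP mo p₁ ⊔ lmP mo p₂

/-- `G` is a Gröbner basis of the ideal `⟨f₁,…,f_d⟩` w.r.t. `≺_m`: `G` consists of
elements of the ideal, and for every nonzero `v` in the ideal there is a nonzero
`g ∈ G` with `lm g ∣ lm v`. -/
def IsGroebnerBasis (mo : MonOrder n) (f : Fin d → MvPolynomial (Fin n) K)
    (G : Set (MvPolynomial (Fin n) K)) : Prop :=
  (∀ g ∈ G, g ∈ Ideal.span (Set.range f)) ∧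
  ∀ v ∈ Ideal.span (Set.range f), v ≠ 0 →
    ∃ g ∈ G, g ≠ 0 ∧ mo.lm g ≤ mo.lm v


/-! ### Auxiliary development for Statement 9 -/

section Aux

variable {K : Type*} [Field K] {n d : ℕ}

/-- Any nonempty finset has a maximum w.r.t. a transitive total relation. -/
lemma exists_rel_max {α : Type*} (lt : α → α → Prop)
    (htr : ∀ a b c, lt a b → lt b c → lt a c)
    (htot : ∀ a b, lt a b ∨ a = b ∨ lt b a) :
    ∀ s : Finset α, s.Nonempty → ∃ m ∈ s, ∀ x ∈ s, x ≠ m → lt x m := by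
  classical
  intro s
  induction s using Finset.induction_on with
  | empty => rintro ⟨x, hx⟩; exact absurd hx (Finset.notMem_empty x)
  | @insert a s ha ih =>
    intro _
    rcases s.eq_empty_or_nonempty with rfl | hs
    · refine ⟨a, Finset.mem_insert_self a _, ?_⟩
      intro x hx hne
      rcases Finset.mem_insert.mp hx with rfl | hx
      · exact absurd rfl hne
      · exact absurd hx (Finset.notMem_empty x)
    · obtain ⟨m, hm, hmax⟩ := ih hs
      rcases htot a m with hlt | heq | hgt
      · refine ⟨m, Finset.mem_insert_of_mem hm, ?_⟩
        intro x hx hne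
        rcases Finset.mem_insert.mp hx with rfl | hx
        · exact hlt
        · exact hmax x hx hne
      · exact absurd (heq ▸ hm) ha
      · refine ⟨a, Finset.mem_insert_self a _, ?_⟩
        intro x hx hne
        rcases Finset.mem_insert.mp hx with rfl | hx
        · exact absurd rfl hne
        · by_cases hxm : x = m
          · subst hxm; exact hgt
          · exact htr _ _ _ (hmax x hx hxm) hgt

namespace MonOrder

variable (mo : MonOrder n)

lemma asymm {a b : Mon n} (h : mo.lt a b) : ¬ mo.lt b a :=
  fun h' => mo.irrefl a (mo.trans _ _ _ h h')

lemma lt_cancel {m a b : Mon n} (h : mo.lt (m + a) (m + b)) : mo.lt a b := by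
  rcases mo.total a b with h1 | rfl | h1
  · exact h1
  · exact absurd h (mo.irrefl _)
  · exact absurd h (mo.asymm (mo.mul_lt_mul m _ _ h1))

lemma lm_spec {v : MvPolynomial (Fin n) K} (hv : v ≠ 0) :
    v.coeff (mo.lm v) ≠ 0 ∧
      ∀ m', v.coeff m' ≠ 0 → m' ≠ mo.lm v → mo.lt m' (mo.lm v) := by
  have hne : v.support.Nonempty := by
    rw [Finset.nonempty_iff_ne_empty, Ne, MvPolynomial.support_eq_empty]; exact hv
  obtain ⟨m, hm, hmax⟩ := exists_rel_max mo.lt mo.trans mo.total v.support hne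
  have hex : ∃ m ∈ v.support, ∀ m' ∈ v.support, m' ≠ m → mo.lt m' m := ⟨m, hm, hmax⟩
  rw [MonOrder.lm, dif_pos hex]
  obtain ⟨h1, h2⟩ := hex.choose_spec
  exact ⟨MvPolynomial.mem_support_iff.mp h1, fun m' hm' hne' =>
    h2 m' (MvPolynomial.mem_support_iff.mpr hm') hne'⟩

lemma lm_mem {v : MvPolynomial (Fin n) K} (hv : v ≠ 0) : v.coeff (mo.lm v) ≠ 0 :=
  (mo.lm_spec hv).1

lemma le_lm {v : MvPolynomial (Fin n) K} {m' : Mon n} (hv : v ≠ 0) (h : v.coeff m' ≠ 0) :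
    m' = mo.lm v ∨ mo.lt m' (mo.lm v) := by
  by_cases he : m' = mo.lm v
  · exact Or.inl he
  · exact Or.inr ((mo.lm_spec hv).2 m' h he)

lemma lm_eq {v : MvPolynomial (Fin n) K} {m : Mon n} (h1 : v.coeff m ≠ 0)
    (h2 : ∀ m', v.coeff m' ≠ 0 → m' ≠ m → mo.lt m' m) : mo.lm v = m := by
  have hv : v ≠ 0 := fun h => h1 (by simp [h])
  by_contra hne
  exact mo.irrefl _ (mo.trans _ _ _ ((mo.lm_spec hv).2 m h1 (fun e => hne e.symm))
    (h2 _ (mo.lm_mem hv) hne))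

lemma coeff_eq_zero_of_lm_lt {v : MvPolynomial (Fin n) K} {m : Mon n}
    (h : mo.lt (mo.lm v) m) : v.coeff m = 0 := by
  by_cases hv : v = 0
  · simp [hv]
  by_contra hc
  rcases mo.le_lm hv hc with rfl | h'
  · exact mo.irrefl _ h
  · exact mo.irrefl _ (mo.trans _ _ _ h' h)

lemma lm_monomial_mul {v : MvPolynomial (Fin n) K} (hv : v ≠ 0) (e : Mon n) :
    mo.lm (MvPolynomial.monomial e (1 : K) * v) = e + mo.lm v := by
  apply mo.lm_eq
  · rw [MvPolynomial.coeff_monomial_mul, one_mul]; exact mo.lm_mem hv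
  · intro m' hm' hne
    rw [MvPolynomial.coeff_monomial_mul'] at hm'
    by_cases hle : e ≤ m'
    · rw [if_pos hle, one_mul] at hm'
      rcases mo.le_lm hv hm' with he | hlt
      · exact absurd (by rw [← he, add_tsub_cancel_of_le hle]) hne
      · have h2 := mo.mul_lt_mul e _ _ hlt
        rwa [add_tsub_cancel_of_le hle] at h2
    · rw [if_neg hle] at hm'; exact absurd rfl hm'

lemma lm_mul {g h : MvPolynomial (Fin n) K} (hg : g ≠ 0) (hh : h ≠ 0) :
    mo.lm (g * h) = mo.lm g + mo.lm h := by
  have key : ∀ x y : Mon n, g.coeff x ≠ 0 → h.coeff y ≠ 0 →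
      ¬(x = mo.lm g ∧ y = mo.lm h) → mo.lt (x + y) (mo.lm g + mo.lm h) := by
    intro x y hx hy hne
    rcases mo.le_lm hg hx with h1 | h1
    · rcases mo.le_lm hh hy with h2 | h2
      · exact absurd ⟨h1, h2⟩ hne
      · rw [h1]; exact mo.mul_lt_mul _ _ _ h2
    · rcases mo.le_lm hh hy with h2 | h2
      · rw [h2, add_comm x, add_comm (mo.lm g)]; exact mo.mul_lt_mul _ _ _ h1
      · exact mo.trans _ _ _ (mo.mul_lt_mul x _ _ h2)
          (by rw [add_comm x, add_comm (mo.lm g)]; exact mo.mul_lt_mul _ _ _ h1)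
  apply mo.lm_eq
  · rw [MvPolynomial.coeff_mul]
    rw [Finset.sum_eq_single ((mo.lm g, mo.lm h) : (Mon n) × (Mon n))]
    · exact mul_ne_zero (mo.lm_mem hg) (mo.lm_mem hh)
    · rintro ⟨x, y⟩ hmem hne
      rw [Finset.HasAntidiagonal.mem_antidiagonal] at hmem
      by_cases hx : g.coeff x = 0
      · rw [hx, zero_mul]
      by_cases hy : h.coeff y = 0
      · rw [hy, mul_zero]
      · exfalso
        have hk := key x y hx hy (by
          intro ⟨e1, e2⟩
          exact hne (by rw [e1, e2]))
        rw [hmem] at hk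
        exact mo.irrefl _ hk
    · intro h0
      simp only [Finset.HasAntidiagonal.mem_antidiagonal] at h0
      exact absurd trivial h0
  · intro m' hm' hne
    have hmem := MvPolynomial.support_mul g h (MvPolynomial.mem_support_iff.mpr hm')
    rw [Finset.mem_add] at hmem
    obtain ⟨x, hx, y, hy, hxy⟩ := hmem
    rw [MvPolynomial.mem_support_iff] at hx hy
    have hk := key x y hx hy (by
      intro ⟨e1, e2⟩
      apply hne
      rw [← hxy, e1, e2])
    rw [hxy] at hk
    exact hk

end MonOrder

namespace SigOrder

variable (so : SigOrder n d)

lemma asymm {s t : Sig n d} (h : so.lt s t) : ¬ so.lt t s :=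
  fun h' => so.irrefl s (so.trans _ _ _ h h')

lemma lt_cancel {m : Mon n} {s t : Sig n d} (h : so.lt (Sig.smul m s) (Sig.smul m t)) :
    so.lt s t := by
  rcases so.total s t with h1 | rfl | h1
  · exact h1
  · exact absurd h (so.irrefl _)
  · exact absurd h (so.asymm (so.smul_lt_smul m _ _ h1))

lemma smul_left_cancel {m : Mon n} {s t : Sig n d} (h : Sig.smul m s = Sig.smul m t) :
    s = t := by
  have h' : ((m + s.1, s.2) : Sig n d) = ((m + t.1, t.2) : Sig n d) := h
  rw [Prod.mk.injEq] at h'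
  exact Prod.ext (add_left_cancel h'.1) h'.2

variable [NeZero d]

lemma sig_spec {u : Fin d → MvPolynomial (Fin n) K} (hu : u ≠ 0) :
    (u (so.sig u).2).coeff (so.sig u).1 ≠ 0 ∧
      ∀ t : Sig n d, (u t.2).coeff t.1 ≠ 0 → t ≠ so.sig u → so.lt t (so.sig u) := by
  classical
  have hmem : ∀ t : Sig n d,
      t ∈ (Finset.univ.biUnion fun i : Fin d =>
        (u i).support.image (fun m => ((m, i) : Sig n d))) ↔ (u t.2).coeff t.1 ≠ 0 := by
    intro t
    simp only [Finset.mem_biUnion, Finset.mem_image, Finset.mem_univ, true_and,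
      MvPolynomial.mem_support_iff]
    constructor
    · rintro ⟨i, m, hm, rfl⟩; exact hm
    · intro ht; exact ⟨t.2, t.1, ht, rfl⟩
  have hne : (Finset.univ.biUnion fun i : Fin d =>
      (u i).support.image (fun m => ((m, i) : Sig n d))).Nonempty := by
    have hex : ∃ i, u i ≠ 0 := by
      by_contra hc; push_neg at hc; exact hu (funext hc)
    obtain ⟨i, hi⟩ := hex
    have hsupp : (u i).support.Nonempty := by
      rw [Finset.nonempty_iff_ne_empty, Ne, MvPolynomial.support_eq_empty]; exact hi
    obtain ⟨m, hm⟩ := hsupp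
    exact ⟨(m, i), Finset.mem_biUnion.mpr
      ⟨i, Finset.mem_univ i, Finset.mem_image.mpr ⟨m, hm, rfl⟩⟩⟩
  obtain ⟨m, hm, hmax⟩ := exists_rel_max so.lt so.trans so.total _ hne
  have hex : ∃ s : Sig n d, (u s.2).coeff s.1 ≠ 0 ∧
      ∀ t : Sig n d, (u t.2).coeff t.1 ≠ 0 → t ≠ s → so.lt t s :=
    ⟨m, (hmem m).mp hm, fun t ht hne' => hmax t ((hmem t).mpr ht) hne'⟩
  rw [SigOrder.sig, dif_pos hex]
  exact hex.choose_spec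

lemma sig_eq {u : Fin d → MvPolynomial (Fin n) K} {s : Sig n d}
    (h1 : (u s.2).coeff s.1 ≠ 0)
    (h2 : ∀ t : Sig n d, (u t.2).coeff t.1 ≠ 0 → t ≠ s → so.lt t s) : so.sig u = s := by
  have hu : u ≠ 0 := fun h => h1 (by simp [h])
  by_contra hne
  exact so.irrefl _ (so.trans _ _ _ ((so.sig_spec hu).2 s h1 (fun e => hne e.symm))
    (h2 _ (so.sig_spec hu).1 hne))

lemma sig_monomial_mul {u : Fin d → MvPolynomial (Fin n) K} (hu : u ≠ 0) (e : Mon n) :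
    so.sig (fun i => MvPolynomial.monomial e (1 : K) * u i) = Sig.smul e (so.sig u) := by
  apply so.sig_eq
  · show (MvPolynomial.monomial e (1:K) * u (so.sig u).2).coeff (e + (so.sig u).1) ≠ 0
    rw [MvPolynomial.coeff_monomial_mul, one_mul]
    exact (so.sig_spec hu).1
  · rintro ⟨m, j⟩ hmj hne
    have hmj' : (MvPolynomial.monomial e (1:K) * u j).coeff m ≠ 0 := hmj
    rw [MvPolynomial.coeff_monomial_mul'] at hmj'
    by_cases hle : e ≤ m
    · rw [if_pos hle, one_mul] at hmj'
      rcases eq_or_ne ((m - e, j) : Sig n d) (so.sig u) with he | hne2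
      · exfalso; apply hne
        rw [← he]
        simp [Sig.smul, add_tsub_cancel_of_le hle]
      · have heq : Sig.smul e ((m - e, j) : Sig n d) = ((m, j) : Sig n d) := by
          simp [Sig.smul, add_tsub_cancel_of_le hle]
        have h3 := so.smul_lt_smul e _ _ ((so.sig_spec hu).2 (m - e, j) hmj' hne2)
        rwa [heq] at h3
    · rw [if_neg hle] at hmj'; exact absurd rfl hmj'

end SigOrder

lemma IsPair.fst_ne_zero {f : Fin d → MvPolynomial (Fin n) K} {p : PairT K n d}
    (hp : IsPair f p) (h2 : p.2 ≠ 0) : p.1 ≠ 0 := by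
  intro h
  apply h2
  rw [← hp, h]
  simp

lemma IsPair.mul {f : Fin d → MvPolynomial (Fin n) K} {p : PairT K n d}
    (hp : IsPair f p) (e : Mon n) : IsPair f (mulPair e p) := by
  show (∑ i, (MvPolynomial.monomial e (1:K) * p.1 i) * f i) =
    MvPolynomial.monomial e (1:K) * p.2
  rw [← hp, Finset.mul_sum]
  exact Finset.sum_congr rfl fun i _ => mul_assoc _ _ _

lemma lmP_mulPair (mo : MonOrder n) {p : PairT K n d} (h2 : p.2 ≠ 0) (e : Mon n) :
    lmP mo (mulPair e p) = e + lmP mo p :=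
  mo.lm_monomial_mul h2 e

lemma sigP_mulPair [NeZero d] (so : SigOrder n d) {p : PairT K n d} (h1 : p.1 ≠ 0) (e : Mon n) :
    sigP so (mulPair e p) = Sig.smul e (sigP so p) :=
  so.sig_monomial_mul h1 e

lemma combine_pair {f : Fin d → MvPolynomial (Fin n) K} {p q : PairT K n d}
    (hp : IsPair f p) (hq : IsPair f q) (γ κ : K) (e : Mon n) :
    IsPair f (fun j => MvPolynomial.C γ * q.1 j -
        MvPolynomial.C κ * (MvPolynomial.monomial e (1:K) * p.1 j),
      MvPolynomial.C γ * q.2 - MvPolynomial.C κ * (MvPolynomial.monomial e (1:K) * p.2)) := by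
  show (∑ j, (MvPolynomial.C γ * q.1 j -
      MvPolynomial.C κ * (MvPolynomial.monomial e (1:K) * p.1 j)) * f j) = _
  rw [← hp, ← hq, Finset.mul_sum, Finset.mul_sum, Finset.mul_sum, ← Finset.sum_sub_distrib]
  exact Finset.sum_congr rfl fun j _ => by ring

/-- The main auxiliary lemma: for an index `i` whose sub-order coincides with `≺_m`,
two TRP pairs with signature index `i` and componentwise-comparable data are similar. -/
lemma similar_of_le [NeZero d] (mo : MonOrder n) (so : SigOrder n d)
    (f : Fin d → MvPolynomial (Fin n) K) {p q : PairT K n d} {i : Fin d}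
    (heq : EqOrders so mo i)
    (hp : IsTRP f mo so p) (hq : IsTRP f mo so q)
    (hip : (sigP so p).2 = i) (hiq : (sigP so q).2 = i)
    (hab : (sigP so p).1 ≤ (sigP so q).1) (hst : lmP mo p ≤ lmP mo q) :
    Similar mo so p q := by
  classical
  by_contra hsim
  obtain ⟨hpair_p, hp2, _⟩ := hp
  obtain ⟨hpair_q, hq2, hqred⟩ := hq
  set a := (sigP so p).1 with ha
  set b := (sigP so q).1 with hb
  set s := lmP mo p with hs
  set t := lmP mo q with ht2
  have hp1 : p.1 ≠ 0 := hpair_p.fst_ne_zero hp2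
  have hq1 : q.1 ≠ 0 := hpair_q.fst_ne_zero hq2
  have hsp : sigP so p = ((a, i) : Sig n d) := by
    rw [ha, ← hip]
  have hsq : sigP so q = ((b, i) : Sig n d) := by
    rw [hb, ← hiq]
  set c := t - s with hc
  set e := b - a with he
  have hcs : c + s = t := tsub_add_cancel_of_le hst
  have hea : e + a = b := tsub_add_cancel_of_le hab
  -- Step 1: q is not top reducible by c·p, hence b ≺_m c + a
  have hstar : mo.lt b (c + a) := by
    have hr1pair : IsPair f (mulPair c p) := hpair_p.mul c
    have hr1ne : (mulPair c p).2 ≠ 0 := by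
      show MvPolynomial.monomial c (1:K) * p.2 ≠ 0
      exact mul_ne_zero (by simp [MvPolynomial.monomial_eq_zero]) hp2
    have hr1lm : lmP mo (mulPair c p) = t := by
      rw [lmP_mulPair mo hp2, ← hs, hcs]
    have hr1sig : sigP so (mulPair c p) = ((c + a, i) : Sig n d) := by
      rw [sigP_mulPair so hp1 c, hsp]
      rfl
    have hnored := hqred _ hr1pair
    rcases so.total (Sig.smul t (sigP so (mulPair c p)))
        (Sig.smul (lmP mo (mulPair c p)) (sigP so q)) with h1 | h1 | h1
    · exact absurd ⟨hq2, hr1ne, h1, le_of_eq hr1lm⟩ hnored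
    · exfalso
      rw [hr1lm, hr1sig, hsq] at h1
      have hcab : c + a = b := congrArg Prod.fst (SigOrder.smul_left_cancel h1)
      apply hsim
      show Sig.smul s (sigP so q) = Sig.smul t (sigP so p)
      rw [hsq, hsp]
      show ((s + b, i) : Sig n d) = ((t + a, i) : Sig n d)
      rw [← hcab, ← hcs, show s + (c + a) = c + s + a by abel]
    · rw [hr1lm, hr1sig, hsq] at h1
      have h2 := so.lt_cancel h1
      exact (heq b (c + a)).mp h2
  rcases mo.total t (e + s) with h1 | h1 | h1
  · -- t ≺ e + s : contradiction with hstar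
    rw [← hcs, add_comm c s, add_comm e s] at h1
    have hce : mo.lt c e := mo.lt_cancel h1
    rw [← hea, add_comm e a, add_comm c a] at hstar
    exact mo.asymm hce (mo.lt_cancel hstar)
  · -- t = e + s : then p and q are similar
    apply hsim
    show Sig.smul s (sigP so q) = Sig.smul t (sigP so p)
    rw [hsq, hsp]
    show ((s + b, i) : Sig n d) = ((t + a, i) : Sig n d)
    rw [← hea, h1, show s + (e + a) = e + s + a by abel]
  · -- e + s ≺ t : build a combination reducer for q
    have hγ : (p.1 i).coeff a ≠ 0 := by
      have h0 := (so.sig_spec hp1).1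
      rw [show so.sig p.1 = ((a, i) : Sig n d) from hsp] at h0
      exact h0
    have hκ : (q.1 i).coeff b ≠ 0 := by
      have h0 := (so.sig_spec hq1).1
      rw [show so.sig q.1 = ((b, i) : Sig n d) from hsq] at h0
      exact h0
    have hmonp : MvPolynomial.monomial e (1:K) * p.2 ≠ 0 :=
      mul_ne_zero (by simp [MvPolynomial.monomial_eq_zero]) hp2
    have hlmmon : mo.lm (MvPolynomial.monomial e (1:K) * p.2) = e + s := by
      rw [mo.lm_monomial_mul hp2]; rfl
    set vr := MvPolynomial.C ((p.1 i).coeff a) * q.2 -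
      MvPolynomial.C ((q.1 i).coeff b) * (MvPolynomial.monomial e (1:K) * p.2) with hvr
    set ur := fun j => MvPolynomial.C ((p.1 i).coeff a) * q.1 j -
      MvPolynomial.C ((q.1 i).coeff b) * (MvPolynomial.monomial e (1:K) * p.1 j) with hur
    have hz : (MvPolynomial.monomial e (1:K) * p.2).coeff t = 0 :=
      mo.coeff_eq_zero_of_lm_lt (by rw [hlmmon]; exact h1)
    have hcoefft : vr.coeff t = (p.1 i).coeff a * q.2.coeff t := by
      rw [hvr, MvPolynomial.coeff_sub, MvPolynomial.coeff_C_mul, MvPolynomial.coeff_C_mul,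
        hz, mul_zero, sub_zero]
    have hvrt : vr.coeff t ≠ 0 := by
      rw [hcoefft]
      exact mul_ne_zero hγ (mo.lm_mem hq2)
    have hvrne : vr ≠ 0 := fun h0 => hvrt (by rw [h0]; simp)
    have hlmvr : mo.lm vr = t := by
      apply mo.lm_eq hvrt
      intro m' hm' hne
      rw [hvr, MvPolynomial.coeff_sub, MvPolynomial.coeff_C_mul,
        MvPolynomial.coeff_C_mul] at hm'
      by_cases h2 : q.2.coeff m' ≠ 0
      · exact (mo.lm_spec hq2).2 m' h2 hne
      · push_neg at h2
        rw [h2, mul_zero, zero_sub, neg_ne_zero] at hm'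
        have h3 : (MvPolynomial.monomial e (1:K) * p.2).coeff m' ≠ 0 :=
          right_ne_zero_of_mul hm'
        rcases mo.le_lm hmonp h3 with h4 | h4
        · rw [h4, hlmmon]; exact h1
        · exact mo.trans _ _ _ (by rwa [hlmmon] at h4) h1
    have hrpair : IsPair f ((ur, vr) : PairT K n d) :=
      combine_pair hpair_p hpair_q ((p.1 i).coeff a) ((q.1 i).coeff b) e
    have hurne : ur ≠ 0 := by
      intro h0
      apply hvrne
      have h1' : (∑ j, ur j * f j) = vr := hrpair
      rw [← h1', h0]
      simp
    have hsig : so.lt (so.sig ur) ((b, i) : Sig n d) := by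
      have hspec := so.sig_spec hurne
      set σ := so.sig ur with hσ
      have hσne : σ ≠ ((b, i) : Sig n d) := by
        intro h0
        have hc := hspec.1
        rw [h0] at hc
        apply hc
        show MvPolynomial.coeff b (MvPolynomial.C ((p.1 i).coeff a) * q.1 i -
          MvPolynomial.C ((q.1 i).coeff b) * (MvPolynomial.monomial e (1:K) * p.1 i)) = 0
        rw [MvPolynomial.coeff_sub, MvPolynomial.coeff_C_mul, MvPolynomial.coeff_C_mul,
          ← hea, MvPolynomial.coeff_monomial_mul, one_mul]
        ring
      rcases so.total σ ((b, i) : Sig n d) with h2 | h2 | h2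
      · exact h2
      · exact absurd h2 hσne
      · exfalso
        have hc := hspec.1
        have hsplit : (MvPolynomial.C ((p.1 i).coeff a) * q.1 σ.2).coeff σ.1 ≠ 0 ∨
            (MvPolynomial.C ((q.1 i).coeff b) *
              (MvPolynomial.monomial e (1:K) * p.1 σ.2)).coeff σ.1 ≠ 0 := by
          by_contra hboth
          push_neg at hboth
          apply hc
          show MvPolynomial.coeff σ.1 (MvPolynomial.C ((p.1 i).coeff a) * q.1 σ.2 -
            MvPolynomial.C ((q.1 i).coeff b) *
              (MvPolynomial.monomial e (1:K) * p.1 σ.2)) = 0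
          rw [MvPolynomial.coeff_sub, hboth.1, hboth.2, sub_zero]
        rcases hsplit with hcq | hcp
        · rw [MvPolynomial.coeff_C_mul] at hcq
          have hcq' : (q.1 σ.2).coeff σ.1 ≠ 0 := right_ne_zero_of_mul hcq
          have hsq' : so.sig q.1 = ((b, i) : Sig n d) := hsq
          have h3 := (so.sig_spec hq1).2 σ hcq' (by rw [hsq']; exact hσne)
          rw [hsq'] at h3
          exact so.asymm h2 h3
        · rw [MvPolynomial.coeff_C_mul] at hcp
          have hcp' : (MvPolynomial.monomial e (1:K) * p.1 σ.2).coeff σ.1 ≠ 0 :=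
            right_ne_zero_of_mul hcp
          rw [MvPolynomial.coeff_monomial_mul'] at hcp'
          by_cases hle : e ≤ σ.1
          · rw [if_pos hle, one_mul] at hcp'
            have hsp' : so.sig p.1 = ((a, i) : Sig n d) := hsp
            have h7 : Sig.smul e ((σ.1 - e, σ.2) : Sig n d) = σ := by
              simp [Sig.smul, add_tsub_cancel_of_le hle]
            have h8 : Sig.smul e ((a, i) : Sig n d) = ((b, i) : Sig n d) := by
              show ((e + a, i) : Sig n d) = ((b, i) : Sig n d)
              rw [hea]
            rcases eq_or_ne ((σ.1 - e, σ.2) : Sig n d) ((a, i) : Sig n d) with h4 | h4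
            · apply hσne
              rw [← h7, h4, h8]
            · have h5 := (so.sig_spec hp1).2 (σ.1 - e, σ.2) hcp' (by rw [hsp']; exact h4)
              rw [hsp'] at h5
              have h6 := so.smul_lt_smul e _ _ h5
              rw [h7, h8] at h6
              exact so.asymm h2 h6
          · rw [if_neg hle] at hcp'
            exact hcp' rfl
    have hPairLt : PairLt mo so q ((ur, vr) : PairT K n d) := by
      show so.lt (Sig.smul (lmP mo q) (so.sig ur)) (Sig.smul (mo.lm vr) (so.sig q.1))
      rw [hlmvr, show so.sig q.1 = ((b, i) : Sig n d) from hsq]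
      exact so.smul_lt_smul t _ _ hsig
    exact hqred ((ur, vr) : PairT K n d) hrpair ⟨hq2, hvrne, hPairLt, le_of_eq hlmvr⟩

/-- At the special index `k0` of an almost compatible (but not compatible) setup,
every TRP pair has signature `(lm(g), k0)` and leading monomial `lm(g) + lm(f k0)`
where `g` is the `k0`-component. -/
lemma special_data [NeZero d] (mo : MonOrder n) (so : SigOrder n d)
    (f : Fin d → MvPolynomial (Fin n) K) (k0 : Fin d)
    (hbelow : ∀ (a : Mon n) (i : Fin d), i ≠ k0 → so.lt (a, k0) ((0 : Mon n), i))
    {q : PairT K n d} (hq : IsTRP f mo so q) (hiq : (sigP so q).2 = k0) :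
    sigP so q = ((mo.lm (q.1 k0), k0) : Sig n d) ∧
      lmP mo q = mo.lm (q.1 k0) + mo.lm (f k0) := by
  classical
  obtain ⟨hpair, hq2, hqred⟩ := hq
  have hq1 : q.1 ≠ 0 := hpair.fst_ne_zero hq2
  set σ := (sigP so q).1 with hσ
  have hsq : so.sig q.1 = ((σ, k0) : Sig n d) := by
    rw [hσ, ← hiq]
    exact Prod.mk.eta.symm
  have hzero : ∀ j, j ≠ k0 → q.1 j = 0 := by
    intro j hj
    ext m
    rw [MvPolynomial.coeff_zero]
    by_contra hc
    have h1 := (so.sig_spec hq1).2 (m, j) hc (by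
      rw [hsq]
      intro h0
      exact hj (congrArg Prod.snd h0))
    rw [hsq] at h1
    have h2 := hbelow σ j hj
    have h3 := so.le_smul m ((0 : Mon n), j)
    have h4 : Sig.smul m ((0 : Mon n), j) = ((m, j) : Sig n d) := by
      show ((m + 0, j) : Sig n d) = ((m, j) : Sig n d)
      rw [add_zero]
    rw [h4] at h3
    rcases h3 with h3 | h3
    · rw [← h3] at h1
      exact so.asymm h1 h2
    · exact so.asymm h1 (so.trans _ _ _ h2 h3)
  have hv : q.2 = q.1 k0 * f k0 := by
    rw [← hpair]
    exact Finset.sum_eq_single k0 (fun j _ hj => by rw [hzero j hj, zero_mul])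
      (fun h0 => absurd (Finset.mem_univ k0) h0)
  have hg : q.1 k0 ≠ 0 := fun h0 => hq2 (by rw [hv, h0, zero_mul])
  have hf : f k0 ≠ 0 := fun h0 => hq2 (by rw [hv, h0, mul_zero])
  have hlmv : mo.lm q.2 = mo.lm (q.1 k0) + mo.lm (f k0) := by
    rw [hv]
    exact mo.lm_mul hg hf
  have h6 : ((mo.lm (q.1 k0), k0) : Sig n d) = ((σ, k0) : Sig n d) ∨
      so.lt ((mo.lm (q.1 k0), k0) : Sig n d) ((σ, k0) : Sig n d) := by
    rcases eq_or_ne ((mo.lm (q.1 k0), k0) : Sig n d) ((σ, k0) : Sig n d) with h0 | h0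
    · exact Or.inl h0
    · right
      have h5 := (so.sig_spec hq1).2 (mo.lm (q.1 k0), k0) (mo.lm_mem hg)
        (by rw [hsq]; exact h0)
      rwa [hsq] at h5
  set r : PairT K n d := (fun j => if j = k0 then
      MvPolynomial.monomial (mo.lm (q.1 k0)) (1:K) else 0,
    MvPolynomial.monomial (mo.lm (q.1 k0)) (1:K) * f k0) with hrdef
  have hrpair : IsPair f r := by
    show (∑ j, r.1 j * f j) = r.2
    rw [hrdef]
    simp only
    rw [Finset.sum_eq_single k0 (fun j _ hj => by rw [if_neg hj, zero_mul])
      (fun h0 => absurd (Finset.mem_univ k0) h0), if_pos rfl]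
  have hm_r2 : r.2 ≠ 0 := by
    show MvPolynomial.monomial (mo.lm (q.1 k0)) (1:K) * f k0 ≠ 0
    exact mul_ne_zero (by simp [MvPolynomial.monomial_eq_zero]) hf
  have hsigr : so.sig r.1 = ((mo.lm (q.1 k0), k0) : Sig n d) := by
    apply so.sig_eq
    · show (r.1 k0).coeff (mo.lm (q.1 k0)) ≠ 0
      rw [hrdef]
      simp [MvPolynomial.coeff_monomial]
    · rintro ⟨m, j⟩ hmj hne
      by_cases hj : j = k0
      · subst hj
        have hmj' : (MvPolynomial.monomial (mo.lm (q.1 j)) (1:K)).coeff m ≠ 0 := by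
          have : r.1 j = MvPolynomial.monomial (mo.lm (q.1 j)) (1:K) := by
            rw [hrdef]; simp
          rw [← this]
          exact hmj
        rw [MvPolynomial.coeff_monomial] at hmj'
        by_cases hm : mo.lm (q.1 j) = m
        · exact absurd (by rw [hm]) hne
        · rw [if_neg hm] at hmj'
          exact absurd rfl hmj'
      · exfalso
        apply hmj
        show (r.1 j).coeff m = 0
        rw [hrdef]
        simp [hj]
  have hlmr : mo.lm r.2 = mo.lm (q.1 k0) + mo.lm (f k0) := by
    show mo.lm (MvPolynomial.monomial (mo.lm (q.1 k0)) (1:K) * f k0) = _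
    exact mo.lm_monomial_mul hf _
  have hσm : σ = mo.lm (q.1 k0) := by
    rcases h6 with h0 | h0
    · exact (congrArg Prod.fst h0).symm
    · exfalso
      apply hqred r hrpair
      have e3 : lmP mo r = lmP mo q := by
        show mo.lm r.2 = mo.lm q.2
        rw [hlmr, hlmv]
      refine ⟨hq2, hm_r2, ?_, le_of_eq e3⟩
      show so.lt (Sig.smul (lmP mo q) (so.sig r.1)) (Sig.smul (lmP mo r) (so.sig q.1))
      rw [hsigr, hsq, e3]
      exact so.smul_lt_smul (lmP mo q) _ _ h0
  constructor
  · show sigP so q = _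
    have hx : sigP so q = ((σ, k0) : Sig n d) := hsq
    rw [hx, hσm]
  · show mo.lm q.2 = _
    exact hlmv

/-- Any two TRP pairs with signature index `k0` are similar. -/
lemma special_similar [NeZero d] (mo : MonOrder n) (so : SigOrder n d)
    (f : Fin d → MvPolynomial (Fin n) K) (k0 : Fin d)
    (hbelow : ∀ (a : Mon n) (i : Fin d), i ≠ k0 → so.lt (a, k0) ((0 : Mon n), i))
    {p q : PairT K n d} (hp : IsTRP f mo so p) (hq : IsTRP f mo so q)
    (hip : (sigP so p).2 = k0) (hiq : (sigP so q).2 = k0) :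
    Similar mo so p q := by
  obtain ⟨hp1, hp2⟩ := special_data mo so f k0 hbelow hp hip
  obtain ⟨hq1, hq2⟩ := special_data mo so f k0 hbelow hq hiq
  show Sig.smul (lmP mo p) (sigP so q) = Sig.smul (lmP mo q) (sigP so p)
  rw [hp1, hq1, hp2, hq2]
  show ((mo.lm (p.1 k0) + mo.lm (f k0) + mo.lm (q.1 k0), k0) : Sig n d) =
    ((mo.lm (q.1 k0) + mo.lm (f k0) + mo.lm (p.1 k0), k0) : Sig n d)
  rw [show mo.lm (p.1 k0) + mo.lm (f k0) + mo.lm (q.1 k0) =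
    mo.lm (q.1 k0) + mo.lm (f k0) + mo.lm (p.1 k0) by abel]

/-- The similarity class data of a pair. -/
noncomputable def cl [NeZero d] (mo : MonOrder n) (so : SigOrder n d) (p : PairT K n d) :
    Fin d × (Fin n → ℤ) :=
  ((sigP so p).2, fun x => (lmP mo p x : ℤ) - ((sigP so p).1 x : ℤ))

lemma similar_of_cl_eq [NeZero d] (mo : MonOrder n) (so : SigOrder n d) {p q : PairT K n d}
    (h : cl mo so p = cl mo so q) : Similar mo so p q := by
  have hfst : (cl mo so p).1 = (cl mo so q).1 := by rw [h]
  have hsnd : (cl mo so p).2 = (cl mo so q).2 := by rw [h]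
  have h1 : (sigP so p).2 = (sigP so q).2 := hfst
  have h2 : ∀ x, (lmP mo p x : ℤ) - ((sigP so p).1 x : ℤ) =
      (lmP mo q x : ℤ) - ((sigP so q).1 x : ℤ) := fun x => congrFun hsnd x
  show ((lmP mo p + (sigP so q).1, (sigP so q).2) : Sig n d) =
    ((lmP mo q + (sigP so p).1, (sigP so p).2) : Sig n d)
  refine Prod.ext ?_ h1.symm
  ext x
  rw [Finsupp.add_apply, Finsupp.add_apply]
  have h3 := h2 x
  have h4 : (lmP mo p x : ℤ) + ((sigP so q).1 x : ℤ) =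
      (lmP mo q x : ℤ) + ((sigP so p).1 x : ℤ) := by linarith
  have h5 : ((lmP mo p x + (sigP so q).1 x : ℕ) : ℤ) =
      ((lmP mo q x + (sigP so p).1 x : ℕ) : ℤ) := by push_cast; linarith
  exact Nat.cast_injective h5

lemma cl_eq_of_similar [NeZero d] (mo : MonOrder n) (so : SigOrder n d) {p q : PairT K n d}
    (h : Similar mo so p q) : cl mo so p = cl mo so q := by
  have h' : ((lmP mo p + (sigP so q).1, (sigP so q).2) : Sig n d) =
      ((lmP mo q + (sigP so p).1, (sigP so p).2) : Sig n d) := h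
  rw [Prod.mk.injEq] at h'
  have h1 : (sigP so q).2 = (sigP so p).2 := h'.2
  have h2 : lmP mo p + (sigP so q).1 = lmP mo q + (sigP so p).1 := h'.1
  refine Prod.ext h1.symm ?_
  funext x
  have h2x : (lmP mo p + (sigP so q).1) x = (lmP mo q + (sigP so p).1) x := by rw [h2]
  rw [Finsupp.add_apply, Finsupp.add_apply] at h2x
  have h3 := congrArg (Nat.cast : ℕ → ℤ) h2x
  push_cast at h3
  show (lmP mo p x : ℤ) - ((sigP so p).1 x : ℤ) = (lmP mo q x : ℤ) - ((sigP so q).1 x : ℤ)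
  linarith

end Aux


/-- If `≺_m` and `≺_s` are almost compatible, then for every input
`f = (f₁,…,f_d) ∈ P^d` the set of TRP pairs has only finitely many similarity classes. -/
theorem almostCompatible_finitely_many_TRP_classes {K : Type*} [Field K] {n d : ℕ}
    [NeZero d] (mo : MonOrder n) (so : SigOrder n d)
    (h : AlmostCompatible mo so) (f : Fin d → MvPolynomial (Fin n) K) :
    ∃ T : Finset (PairT K n d), ∀ p : PairT K n d, IsTRP f mo so p →
      ∃ q ∈ T, Similar mo so p q := by
  classical
  have key : ∀ i : Fin d, ∀ p q : PairT K n d, IsTRP f mo so p → IsTRP f mo so q →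
      (sigP so p).2 = i → (sigP so q).2 = i →
      (sigP so p).1 ≤ (sigP so q).1 → lmP mo p ≤ lmP mo q → Similar mo so p q := by
    intro i p q hp hq hip hiq hab hst
    rcases h with hall | ⟨k0, _, hothers, hbelow⟩
    · exact similar_of_le mo so f (hall i) hp hq hip hiq hab hst
    · by_cases hik : i = k0
      · subst hik
        exact special_similar mo so f i hbelow hp hq hip hiq
      · exact similar_of_le mo so f (hothers i hik) hp hq hip hiq hab hst
  set S : Set (PairT K n d) := {p | IsTRP f mo so p} with hS
  have hfin : (Set.image (cl mo so) S).Finite := by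
    have hdecomp : Set.image (cl mo so) S =
        ⋃ i : Fin d, {y | y ∈ Set.image (cl mo so) S ∧ y.1 = i} := by
      ext y
      simp only [Set.mem_iUnion, Set.mem_setOf_eq]
      constructor
      · intro hy; exact ⟨y.1, hy, rfl⟩
      · rintro ⟨i, hy, _⟩; exact hy
    rw [hdecomp]
    apply Set.finite_iUnion
    intro i
    by_contra hinf
    have e := Set.Infinite.natEmbedding _ hinf
    have hex : ∀ j : ℕ, ∃ p : PairT K n d, IsTRP f mo so p ∧ cl mo so p = (e j : _) ∧
        (sigP so p).2 = i := by
      intro j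
      obtain ⟨hyA, hyi⟩ := (e j).2
      obtain ⟨p, hpS, hpcl⟩ := hyA
      refine ⟨p, hpS, hpcl, ?_⟩
      have hfst : (cl mo so p).1 = (sigP so p).2 := rfl
      rw [← hfst, hpcl]
      exact hyi
    choose P hP1 hP2 hP3 using hex
    have hPWO : (Set.univ : Set ((Mon n) × (Mon n))).IsPWO := by
      rw [← Set.univ_prod_univ]
      exact (Set.isPWO_of_wellQuasiOrderedLE _).prod (Set.isPWO_of_wellQuasiOrderedLE _)
    obtain ⟨j, k, hjk, hle⟩ := hPWO.exists_lt (f := fun j => ((sigP so (P j)).1, lmP mo (P j)))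
      (fun _ => Set.mem_univ _)
    have hsim2 := key i (P j) (P k) (hP1 j) (hP1 k) (hP3 j) (hP3 k) hle.1 hle.2
    have hcl := cl_eq_of_similar mo so hsim2
    rw [hP2 j, hP2 k] at hcl
    exact absurd (e.injective (Subtype.ext hcl)) (Nat.ne_of_lt hjk)
  set g : Fin d × (Fin n → ℤ) → PairT K n d := fun y =>
    if hy : ∃ p : PairT K n d, IsTRP f mo so p ∧ cl mo so p = y then hy.choose
    else (0, 0) with hg
  refine ⟨hfin.toFinset.image g, ?_⟩
  intro p hp
  have hmem : cl mo so p ∈ Set.image (cl mo so) S := ⟨p, hp, rfl⟩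
  have hex : ∃ p' : PairT K n d, IsTRP f mo so p' ∧ cl mo so p' = cl mo so p := ⟨p, hp, rfl⟩
  refine ⟨g (cl mo so p), Finset.mem_image_of_mem g (hfin.mem_toFinset.mpr hmem), ?_⟩
  have hgp : g (cl mo so p) = hex.choose := by
    rw [hg]
    exact dif_pos hex
  rw [hgp]
  obtain ⟨h1', h2'⟩ := hex.choose_spec
  exact similar_of_cl_eq mo so h2'.symm


end TRB
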